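/- Offline pessimism with pointwise uncertainty (Theorem 3.1, Option II, deterministic form): suppose the true reward is linear, r*(x,a) = ⟨θ*, φ(x,a)⟩, let θ̂ ∈ ℝ^d and a symmetric positive definite Σ ∈ ℝ^{d×d} satisfy ‖θ̂ − θ*‖_Σ ≤ β for some β ≥ 0, let ν ∈ ℝ^d, and let π̂ be the Gibbs policy of the pessimistic reward r̂(x,a) = ⟨θ̂, φ(x,a)⟩ − β·‖φ(x,a) − ν‖_{Σ^{-1}}. Then for any policy π with supp(π(·|x)) ⊆ supp(π0(·|x)) for all x, J(π) − J(π̂) ≤ 2β·E_{x∼d0, a∼π(·|x)} ‖φ(x,a) − ν‖_{Σ^{-1}} − η·E_{x∼d0} KL(π(·|x)‖π̂(·|x)). -/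

import Mathlib

open Finset Matrix

/-- KL divergence between two distributions on a finite set. -/
noncomputable def KL {A : Type*} [Fintype A] (p q : A → ℝ) : ℝ :=
  ∑ a, p a * Real.log (p a / q a)

/-- KL-regularized value of a policy. -/
noncomputable def J {X A : Type*} [Fintype X] [Fintype A]
    (d0 : X → ℝ) (pi0 : X → A → ℝ) (η : ℝ) (rstar : X → A → ℝ)
    (p : X → A → ℝ) : ℝ :=
  ∑ x, d0 x * ((∑ a, p x a * rstar x a) - η * KL (p x) (pi0 x))

/-- The matrix-weighted norm ‖v‖_M = √(vᵀ M v). -/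
noncomputable def matNorm {d : ℕ} (M : Matrix (Fin d) (Fin d) ℝ) (v : Fin d → ℝ) : ℝ :=
  Real.sqrt (v ⬝ᵥ M.mulVec v)

lemma symm_shift {d : ℕ} {M : Matrix (Fin d) (Fin d) ℝ} (hM : Mᵀ = M)
    (x y : Fin d → ℝ) : (M *ᵥ x) ⬝ᵥ y = x ⬝ᵥ (M *ᵥ y) := by
  rw [dotProduct_comm, Matrix.dotProduct_mulVec, ← Matrix.mulVec_transpose, hM,
    dotProduct_comm]

lemma dot_self_nonneg {d : ℕ} (f : Fin d → ℝ) : 0 ≤ f ⬝ᵥ f :=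
  Finset.sum_nonneg fun _ _ => mul_self_nonneg _

open scoped MatrixOrder in
lemma cs_mat {d : ℕ} {Sig : Matrix (Fin d) (Fin d) ℝ} (hSig : Sig.PosDef)
    (u v : Fin d → ℝ) : |u ⬝ᵥ v| ≤ matNorm Sig u * matNorm Sig⁻¹ v := by
  classical
  set S := CFC.sqrt Sig with hSdef
  have hSsd : S.PosSemidef := (CFC.sqrt_nonneg Sig).posSemidef
  have hSherm : Sᵀ = S := by
    have := hSsd.isHermitian
    simpa [Matrix.IsHermitian, Matrix.conjTranspose_eq_transpose_of_trivial] using this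
  have hSS : S * S = Sig := CFC.sqrt_mul_sqrt_self Sig hSig.posSemidef.nonneg
  have hUnit : IsUnit S := by
    have h1 : IsUnit Sig := hSig.isUnit
    rw [← hSS] at h1
    rw [Matrix.isUnit_iff_isUnit_det] at h1 ⊢
    rw [Matrix.det_mul] at h1
    exact isUnit_of_mul_isUnit_left h1
  have hdet : IsUnit S.det := (Matrix.isUnit_iff_isUnit_det S).mp hUnit
  have hSinv : S * S⁻¹ = 1 := Matrix.mul_nonsing_inv S hdet
  have hSinvT : (S⁻¹)ᵀ = S⁻¹ := by rw [Matrix.transpose_nonsing_inv, hSherm]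
  have hinv2 : S⁻¹ * S⁻¹ = Sig⁻¹ := by rw [← hSS, Matrix.mul_inv_rev]
  set f := S *ᵥ u with hf
  set g := S⁻¹ *ᵥ v with hg
  have key : u ⬝ᵥ v = f ⬝ᵥ g := by
    rw [hf, hg, symm_shift hSherm, Matrix.mulVec_mulVec, hSinv, Matrix.one_mulVec]
  have hff : f ⬝ᵥ f = u ⬝ᵥ Sig.mulVec u := by
    rw [hf, symm_shift hSherm, Matrix.mulVec_mulVec, hSS]
  have hgg : g ⬝ᵥ g = v ⬝ᵥ Sig⁻¹.mulVec v := by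
    rw [hg, symm_shift hSinvT, Matrix.mulVec_mulVec, hinv2]
  have hcs : (f ⬝ᵥ g) ^ 2 ≤ (f ⬝ᵥ f) * (g ⬝ᵥ g) := by
    have := Finset.sum_mul_sq_le_sq_mul_sq Finset.univ f g
    simpa [dotProduct, pow_two, mul_comm] using this
  rw [key, matNorm, matNorm, ← hff, ← hgg]
  rw [(Real.sqrt_sq_eq_abs (f ⬝ᵥ g)).symm, ← Real.sqrt_mul (dot_self_nonneg f)]
  exact Real.sqrt_le_sqrt hcs

lemma gibbs_identity {A : Type*} [Fintype A] (η : ℝ) (hη : 0 < η)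
    (q : A → ℝ) (hq : ∀ a, 0 < q a)
    (r : A → ℝ) (g : A → ℝ)
    (hg : ∀ a, g a = q a * Real.exp (r a / η) / ∑ b, q b * Real.exp (r b / η))
    (p : A → ℝ) (hpsum : ∑ a, p a = 1) :
    (∑ a, p a * r a) - η * KL p q
      = η * Real.log (∑ b, q b * Real.exp (r b / η)) - η * KL p g := by
  set Z := ∑ b, q b * Real.exp (r b / η) with hZ
  have hne : (Finset.univ : Finset A).Nonempty := by
    by_contra h
    rw [Finset.not_nonempty_iff_eq_empty] at h
    rw [h, Finset.sum_empty] at hpsum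
    norm_num at hpsum
  have hZpos : 0 < Z := Finset.sum_pos (fun b _ => mul_pos (hq b) (Real.exp_pos _)) hne
  have hterm : ∀ a, p a * Real.log (p a / g a)
      = p a * Real.log (p a / q a) - p a * r a / η + p a * Real.log Z := by
    intro a
    by_cases hpa : p a = 0
    · simp [hpa]
    · have hga : g a = q a * Real.exp (r a / η) / Z := hg a
      rw [hga]
      have hqa := hq a
      have hexp : (0:ℝ) < Real.exp (r a / η) := Real.exp_pos _
      rw [div_div_eq_mul_div, Real.log_div (by positivity) (by positivity),
        Real.log_mul hpa (by positivity), Real.log_mul (ne_of_gt hqa) (ne_of_gt hexp),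
        Real.log_exp, Real.log_div hpa (ne_of_gt hqa)]
      ring
  have hKL : KL p g = KL p q - (∑ a, p a * r a) / η + Real.log Z := by
    rw [KL, KL, Finset.sum_congr rfl (fun a _ => hterm a), Finset.sum_add_distrib,
      Finset.sum_sub_distrib, ← Finset.sum_mul, hpsum, ← Finset.sum_div, one_mul]
  rw [hKL]
  field_simp
  ring

lemma perx {A : Type*} [Fintype A] {d : ℕ}
    (η : ℝ) (hη : 0 < η)
    (q : A → ℝ) (hq : ∀ a, 0 < q a)
    (φa : A → Fin d → ℝ)
    (θstar θhat : Fin d → ℝ)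
    (Sig : Matrix (Fin d) (Fin d) ℝ) (hSig : Sig.PosDef)
    (β : ℝ)
    (hest : matNorm Sig (θhat - θstar) ≤ β)
    (ν : Fin d → ℝ)
    (g : A → ℝ)
    (hg : ∀ a, g a =
      q a * Real.exp ((θhat ⬝ᵥ φa a - β * matNorm Sig⁻¹ (φa a - ν)) / η) /
        ∑ b, q b * Real.exp ((θhat ⬝ᵥ φa b - β * matNorm Sig⁻¹ (φa b - ν)) / η))
    (p : A → ℝ) (hp : ∀ a, 0 ≤ p a) (hpsum : ∑ a, p a = 1) :
    ((∑ a, p a * (θstar ⬝ᵥ φa a)) - η * KL p q)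
      - ((∑ a, g a * (θstar ⬝ᵥ φa a)) - η * KL g q)
    ≤ 2 * β * (∑ a, p a * matNorm Sig⁻¹ (φa a - ν)) - η * KL p g := by
  classical
  set r : A → ℝ := fun a => θhat ⬝ᵥ φa a - β * matNorm Sig⁻¹ (φa a - ν) with hr
  set n : A → ℝ := fun a => matNorm Sig⁻¹ (φa a - ν) with hn
  have hne : (Finset.univ : Finset A).Nonempty := by
    by_contra h
    rw [Finset.not_nonempty_iff_eq_empty] at h
    rw [h, Finset.sum_empty] at hpsum; norm_num at hpsum
  set Z := ∑ b, q b * Real.exp (r b / η) with hZ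
  have hZpos : 0 < Z := Finset.sum_pos (fun b _ => mul_pos (hq b) (Real.exp_pos _)) hne
  have hgpos : ∀ a, 0 < g a := by
    intro a; rw [hg a]
    exact div_pos (mul_pos (hq a) (Real.exp_pos _))
      (Finset.sum_pos (fun b _ => mul_pos (hq b) (Real.exp_pos _)) hne)
  have hgsum : ∑ a, g a = 1 := by
    rw [Finset.sum_congr rfl (fun a _ => hg a), ← Finset.sum_div, ← hZ, div_self (ne_of_gt hZpos)]
  have hid1 := gibbs_identity η hη q hq r g hg p hpsum
  have hid2 := gibbs_identity η hη q hq r g hg g hgsum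
  have hKLgg : KL g g = 0 := by
    unfold KL
    rw [Finset.sum_congr rfl (fun a _ => by
      rw [div_self (ne_of_gt (hgpos a)), Real.log_one, mul_zero])]
    simp
  rw [hKLgg, mul_zero, sub_zero] at hid2
  set c : ℝ := (θstar - θhat) ⬝ᵥ ν with hc
  have hnnonneg : ∀ a, 0 ≤ n a := fun a => Real.sqrt_nonneg _
  have hbound : ∀ a, |(θhat - θstar) ⬝ᵥ (φa a - ν)| ≤ β * n a := by
    intro a
    calc |(θhat - θstar) ⬝ᵥ (φa a - ν)|
        ≤ matNorm Sig (θhat - θstar) * matNorm Sig⁻¹ (φa a - ν) := cs_mat hSig _ _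
      _ ≤ β * n a := mul_le_mul_of_nonneg_right hest (hnnonneg a)
  have hdelta : ∀ a, θstar ⬝ᵥ φa a - r a - c = -((θhat - θstar) ⬝ᵥ (φa a - ν)) + β * n a := by
    intro a
    simp only [hr, hc, hn, sub_dotProduct, dotProduct_sub]
    ring
  have hlb : ∀ a, 0 ≤ θstar ⬝ᵥ φa a - r a - c := by
    intro a
    rw [hdelta a]
    have := (abs_le.mp (hbound a)).2
    linarith
  have hub : ∀ a, θstar ⬝ᵥ φa a - r a - c ≤ 2 * β * n a := by
    intro a
    rw [hdelta a]
    have := (abs_le.mp (hbound a)).1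
    linarith
  have hpd : ∑ a, p a * (θstar ⬝ᵥ φa a) = (∑ a, p a * r a) + (∑ a, p a * (θstar ⬝ᵥ φa a - r a - c)) + c := by
    have : ∀ a ∈ Finset.univ, p a * (θstar ⬝ᵥ φa a) = p a * r a + p a * (θstar ⬝ᵥ φa a - r a - c) + p a * c := by
      intro a _; ring
    rw [show (∑ a, p a * (θstar ⬝ᵥ φa a)) = ∑ a, (p a * r a + p a * (θstar ⬝ᵥ φa a - r a - c) + p a * c) from Finset.sum_congr rfl this]
    rw [Finset.sum_add_distrib, ← Finset.sum_mul, hpsum, one_mul, Finset.sum_add_distrib]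
  have hgd : ∑ a, g a * (θstar ⬝ᵥ φa a) = (∑ a, g a * r a) + (∑ a, g a * (θstar ⬝ᵥ φa a - r a - c)) + c := by
    have : ∀ a ∈ Finset.univ, g a * (θstar ⬝ᵥ φa a) = g a * r a + g a * (θstar ⬝ᵥ φa a - r a - c) + g a * c := by
      intro a _; ring
    rw [show (∑ a, g a * (θstar ⬝ᵥ φa a)) = ∑ a, (g a * r a + g a * (θstar ⬝ᵥ φa a - r a - c) + g a * c) from Finset.sum_congr rfl this]
    rw [Finset.sum_add_distrib, ← Finset.sum_mul, hgsum, one_mul, Finset.sum_add_distrib]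
  have hpsumbd : ∑ a, p a * (θstar ⬝ᵥ φa a - r a - c) ≤ 2 * β * ∑ a, p a * n a := by
    rw [Finset.mul_sum]
    apply Finset.sum_le_sum
    intro a _
    calc p a * (θstar ⬝ᵥ φa a - r a - c) ≤ p a * (2 * β * n a) :=
          mul_le_mul_of_nonneg_left (hub a) (hp a)
      _ = 2 * β * (p a * n a) := by ring
  have hgsumbd : 0 ≤ ∑ a, g a * (θstar ⬝ᵥ φa a - r a - c) :=
    Finset.sum_nonneg fun a _ => mul_nonneg (hgpos a).le (hlb a)
  have key : ((∑ a, p a * (θstar ⬝ᵥ φa a)) - η * KL p q)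
      - ((∑ a, g a * (θstar ⬝ᵥ φa a)) - η * KL g q)
      = (∑ a, p a * (θstar ⬝ᵥ φa a - r a - c))
        - (∑ a, g a * (θstar ⬝ᵥ φa a - r a - c)) - η * KL p g := by
    rw [hpd, hgd]
    have e1 : (∑ a, p a * r a) - η * KL p q = η * Real.log Z - η * KL p g := hid1
    have e2 : (∑ a, g a * r a) - η * KL g q = η * Real.log Z := hid2
    linarith
  rw [key]
  linarith

theorem offline_pessimism_optionII
    {X A : Type*} [Fintype X] [Fintype A] {d : ℕ}
    (d0 : X → ℝ) (hd0 : ∀ x, 0 ≤ d0 x) (hd0sum : ∑ x, d0 x = 1)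
    (η : ℝ) (hη : 0 < η)
    (pi0 : X → A → ℝ) (hpi0pos : ∀ x a, 0 < pi0 x a) (hpi0sum : ∀ x, ∑ a, pi0 x a = 1)
    (φ : X → A → Fin d → ℝ)
    (θstar θhat : Fin d → ℝ)
    (Sig : Matrix (Fin d) (Fin d) ℝ) (hSig : Sig.PosDef)
    (β : ℝ) (hβ : 0 ≤ β)
    (hest : matNorm Sig (θhat - θstar) ≤ β)
    (ν : Fin d → ℝ)
    (phat : X → A → ℝ)
    (hgibbs : ∀ x a, phat x a =
      pi0 x a * Real.exp ((θhat ⬝ᵥ φ x a - β * matNorm Sig⁻¹ (φ x a - ν)) / η) /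
        ∑ b, pi0 x b * Real.exp ((θhat ⬝ᵥ φ x b - β * matNorm Sig⁻¹ (φ x b - ν)) / η))
    (p : X → A → ℝ)
    (hp : ∀ x a, 0 ≤ p x a) (hpsum : ∀ x, ∑ a, p x a = 1)
    (hsupp : ∀ x a, p x a ≠ 0 → pi0 x a ≠ 0) :
    J d0 pi0 η (fun x a => θstar ⬝ᵥ φ x a) p
        - J d0 pi0 η (fun x a => θstar ⬝ᵥ φ x a) phat
      ≤ 2 * β * (∑ x, d0 x * ∑ a, p x a * matNorm Sig⁻¹ (φ x a - ν))
        - η * ∑ x, d0 x * KL (p x) (phat x) := by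
  have lhs_eq : J d0 pi0 η (fun x a => θstar ⬝ᵥ φ x a) p
      - J d0 pi0 η (fun x a => θstar ⬝ᵥ φ x a) phat
      = ∑ x, d0 x * ((((∑ a, p x a * (θstar ⬝ᵥ φ x a)) - η * KL (p x) (pi0 x)))
          - ((∑ a, phat x a * (θstar ⬝ᵥ φ x a)) - η * KL (phat x) (pi0 x))) := by
    unfold _root_.J
    rw [← Finset.sum_sub_distrib]
    exact Finset.sum_congr rfl fun x _ => by ring
  have rhs_eq : 2 * β * (∑ x, d0 x * ∑ a, p x a * matNorm Sig⁻¹ (φ x a - ν))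
        - η * ∑ x, d0 x * KL (p x) (phat x)
      = ∑ x, d0 x * (2 * β * (∑ a, p x a * matNorm Sig⁻¹ (φ x a - ν))
          - η * KL (p x) (phat x)) := by
    rw [Finset.mul_sum, Finset.mul_sum, ← Finset.sum_sub_distrib]
    exact Finset.sum_congr rfl fun x _ => by ring
  rw [lhs_eq, rhs_eq]
  apply Finset.sum_le_sum
  intro x _
  apply mul_le_mul_of_nonneg_left _ (hd0 x)
  exact perx η hη (pi0 x) (hpi0pos x) (φ x) θstar θhat Sig hSig β hest ν (phat x)
    (hgibbs x) (p x) (hp x) (hpsum x)
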